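/- Let Z₁, …, Z_n be i.i.d. random variables with common distribution G on a measurable space 𝒵, let ξ : 𝒵 → ℝ be measurable with mean m := E_G[ξ] and variance σ² := Var_G(ξ) ∈ (0,∞), and let Δ := sup_{t ∈ ℝ} |P((∑ᵢ ξ(Zᵢ) − n·m)/(√n·σ) ≤ t) − Φ(t)|. Let σ̂ ≥ 0 be any random variable defined on the same probability space, and let z ≥ 0 and η ≥ 0 be real numbers. Then |P(∑_{i=1}^n ξ(Zᵢ) > √n·z·σ̂) − (1 − Φ(z − √n·m/σ))| ≤ Δ + P(|σ̂ − σ| > η·σ) + η·z/√(2π). -/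

import Mathlib

open MeasureTheory Real ProbabilityTheory

/-- The standard normal cumulative distribution function. -/
noncomputable def Phi (t : ℝ) : ℝ :=
  (Real.sqrt (2 * Real.pi))⁻¹ * ∫ x in Set.Iic t, Real.exp (-x ^ 2 / 2)

lemma gauss_integrable : MeasureTheory.Integrable (fun x : ℝ => Real.exp (-x ^ 2 / 2)) := by
  have h := integrable_exp_neg_mul_sq (show (0:ℝ) < 1/2 by norm_num)
  convert h using 2 with x
  ring_nf

lemma Phi_lip {a b : ℝ} (hab : a ≤ b) :
    0 ≤ Phi b - Phi a ∧ Phi b - Phi a ≤ (b - a) / Real.sqrt (2 * Real.pi) := by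
  have hInt := gauss_integrable
  have hIa : MeasureTheory.IntegrableOn (fun x : ℝ => Real.exp (-x ^ 2 / 2)) (Set.Iic a) :=
    hInt.integrableOn
  have hIb : MeasureTheory.IntegrableOn (fun x : ℝ => Real.exp (-x ^ 2 / 2)) (Set.Iic b) :=
    hInt.integrableOn
  have hdiff : Phi b - Phi a
      = (Real.sqrt (2 * Real.pi))⁻¹ * ∫ x in a..b, Real.exp (-x ^ 2 / 2) := by
    rw [Phi, Phi, ← mul_sub, intervalIntegral.integral_Iic_sub_Iic hIa hIb]
  have hIoc : (∫ x in a..b, Real.exp (-x ^ 2 / 2))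
      = ∫ x in Set.Ioc a b, Real.exp (-x ^ 2 / 2) := intervalIntegral.integral_of_le hab
  have hc : (0:ℝ) < Real.sqrt (2 * Real.pi) :=
    Real.sqrt_pos.mpr (by positivity)
  constructor
  · rw [hdiff, hIoc]
    have : 0 ≤ ∫ x in Set.Ioc a b, Real.exp (-x ^ 2 / 2) :=
      MeasureTheory.setIntegral_nonneg measurableSet_Ioc fun x _ => (Real.exp_pos _).le
    positivity
  · rw [hdiff, hIoc]
    have hle : (∫ x in Set.Ioc a b, Real.exp (-x ^ 2 / 2))
        ≤ ∫ _x in Set.Ioc a b, (1:ℝ) := by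
      apply MeasureTheory.setIntegral_mono_on hInt.integrableOn
        (MeasureTheory.integrableOn_const measure_Ioc_lt_top.ne) measurableSet_Ioc
      intro x _
      calc Real.exp (-x ^ 2 / 2) ≤ Real.exp 0 := Real.exp_le_exp.mpr (by nlinarith [sq_nonneg x])
        _ = 1 := Real.exp_zero
    have hconst : (∫ _x in Set.Ioc a b, (1:ℝ)) = b - a := by
      simp [Real.volume_Ioc, ENNReal.toReal_ofReal (sub_nonneg.mpr hab), hab]
    rw [div_eq_inv_mul]
    have h0 : 0 ≤ (Real.sqrt (2 * Real.pi))⁻¹ := by positivity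
    exact mul_le_mul_of_nonneg_left (hconst ▸ hle) h0

/-- Nonasymptotic conditional form underlying Theorem 3: the studentized universal
confidence set's miscoverage equals `1 − Φ(z − √n m/σ)` up to the Berry–Esseen error `Δ`,
the studentization error probability, and a Gaussian-Lipschitz remainder. The i.i.d. sample
`Z₁,…,Z_n ∼ G` is modelled by the product measure `Measure.pi (fun _ : Fin n => G)`. -/
theorem studentized_universal_inference_miscoverage_nonasymptotic
    {𝒵 : Type*} [MeasurableSpace 𝒵] (G : Measure 𝒵) [IsProbabilityMeasure G]
    (n : ℕ) (hn : 0 < n)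
    (ξ : 𝒵 → ℝ) (hξ : Measurable ξ)
    (m σ : ℝ) (hm : m = ∫ z, ξ z ∂G)
    (hξ2 : Integrable (fun z => (ξ z) ^ 2) G)
    (hσ : σ ^ 2 = variance ξ G) (hσpos : 0 < σ)
    (Δ : ℝ)
    (hΔ : ∀ t : ℝ, |((Measure.pi fun _ : Fin n => G)
        {ω | ((∑ i, ξ (ω i)) - n * m) / (Real.sqrt n * σ) ≤ t}).toReal - Phi t| ≤ Δ)
    (σhat : (Fin n → 𝒵) → ℝ) (hσhat : Measurable σhat) (hσhat0 : ∀ ω, 0 ≤ σhat ω)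
    (z η : ℝ) (hz : 0 ≤ z) (hη : 0 ≤ η) :
    |((Measure.pi fun _ : Fin n => G)
          {ω | Real.sqrt n * z * σhat ω < ∑ i, ξ (ω i)}).toReal
        - (1 - Phi (z - Real.sqrt n * m / σ))| ≤
      Δ + ((Measure.pi fun _ : Fin n => G) {ω | η * σ < |σhat ω - σ|}).toReal
        + η * z / Real.sqrt (2 * Real.pi) := by
  set P : Measure (Fin n → 𝒵) := Measure.pi fun _ : Fin n => G with hP
  haveI : IsProbabilityMeasure P := by infer_instance
  -- basic real-number probability helpers
  have pr_le_one : ∀ s : Set (Fin n → 𝒵), (P s).toReal ≤ 1 := fun s => by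
    have := prob_le_one (μ := P) (s := s)
    simpa using ENNReal.toReal_mono (by simp) this
  have pr_mono : ∀ {s t : Set (Fin n → 𝒵)}, s ⊆ t → (P s).toReal ≤ (P t).toReal :=
    fun {s t} hst => ENNReal.toReal_mono (measure_ne_top _ _) (measure_mono hst)
  have pr_union : ∀ s t : Set (Fin n → 𝒵),
      (P (s ∪ t)).toReal ≤ (P s).toReal + (P t).toReal := fun s t => by
    have h1 : P (s ∪ t) ≤ P s + P t := measure_union_le s t
    have h2 := ENNReal.toReal_mono
      (by exact ENNReal.add_ne_top.mpr ⟨measure_ne_top _ _, measure_ne_top _ _⟩) h1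
    rwa [ENNReal.toReal_add (measure_ne_top _ _) (measure_ne_top _ _)] at h2
  have pr_compl : ∀ s : Set (Fin n → 𝒵), MeasurableSet s →
      (P sᶜ).toReal = 1 - (P s).toReal := fun s hs => by
    rw [prob_compl_eq_one_sub hs, ENNReal.toReal_sub_of_le prob_le_one (by simp)]
    simp
  -- notation
  set S : (Fin n → 𝒵) → ℝ := fun ω => ∑ i, ξ (ω i) with hS
  have hSm : Measurable S := Finset.measurable_sum _ fun i _ => hξ.comp (measurable_pi_apply i)
  set t₀ : ℝ := z - Real.sqrt n * m / σ with ht₀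
  set C : ℝ → Set (Fin n → 𝒵) :=
    fun t => {ω | (S ω - n * m) / (Real.sqrt n * σ) ≤ t} with hC
  have hCm : ∀ t, MeasurableSet (C t) := fun t =>
    measurableSet_le ((hSm.sub measurable_const).div measurable_const) measurable_const
  set A : Set (Fin n → 𝒵) := {ω | Real.sqrt n * z * σhat ω < S ω} with hA
  set B : Set (Fin n → 𝒵) := {ω | η * σ < |σhat ω - σ|} with hB
  have hsq : (0:ℝ) < Real.sqrt n := Real.sqrt_pos.mpr (by exact_mod_cast hn)
  have hsqsq : Real.sqrt n * Real.sqrt n = (n : ℝ) :=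
    Real.mul_self_sqrt (by positivity)
  have hden : (0:ℝ) < Real.sqrt n * σ := mul_pos hsq hσpos
  -- inclusion 1 : A ∩ Bᶜ ⊆ (C (t₀ - η*z))ᶜ
  have hincl1 : A ⊆ (C (t₀ - η * z))ᶜ ∪ B := by
    intro ω hω
    by_cases hωB : ω ∈ B
    · exact Or.inr hωB
    · left
      simp only [hB, Set.mem_setOf_eq, not_lt] at hωB
      have habs := abs_le.mp hωB
      simp only [hA, Set.mem_setOf_eq] at hω
      simp only [hC, Set.mem_compl_iff, Set.mem_setOf_eq, not_le, ht₀]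
      rw [lt_div_iff₀ hden]
      have hz' : 0 ≤ Real.sqrt n * z := by positivity
      have hge : Real.sqrt n * z * (σ - η * σ) ≤ Real.sqrt n * z * σhat ω := by
        apply mul_le_mul_of_nonneg_left _ hz'
        linarith [habs.1]
      have key : Real.sqrt n * z * (σ - η * σ) < S ω := lt_of_le_of_lt hge hω
      have hpow : Real.sqrt (n:ℝ) ^ 2 = (n:ℝ) := Real.sq_sqrt (by positivity)
      have hexp : (z - Real.sqrt n * m / σ - η * z) * (Real.sqrt n * σ)
          = Real.sqrt n * z * (σ - η * σ) - n * m := by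
        field_simp
        ring_nf
        rw [hpow]
        ring
      rw [hexp]; linarith
  -- inclusion 2 : (C (t₀ + η*z))ᶜ ⊆ A ∪ B
  have hincl2 : (C (t₀ + η * z))ᶜ ⊆ A ∪ B := by
    intro ω hω
    by_cases hωB : ω ∈ B
    · exact Or.inr hωB
    · left
      simp only [hB, Set.mem_setOf_eq, not_lt] at hωB
      have habs := abs_le.mp hωB
      simp only [hC, Set.mem_compl_iff, Set.mem_setOf_eq, not_le, ht₀] at hω
      rw [lt_div_iff₀ hden] at hω
      simp only [hA, Set.mem_setOf_eq]
      have hz' : 0 ≤ Real.sqrt n * z := by positivity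
      have hle : Real.sqrt n * z * σhat ω ≤ Real.sqrt n * z * (σ + η * σ) := by
        apply mul_le_mul_of_nonneg_left _ hz'
        linarith [habs.2]
      have hpow : Real.sqrt (n:ℝ) ^ 2 = (n:ℝ) := Real.sq_sqrt (by positivity)
      have hexp : (z - Real.sqrt n * m / σ + η * z) * (Real.sqrt n * σ)
          = Real.sqrt n * z * (σ + η * σ) - n * m := by
        field_simp
        ring_nf
        rw [hpow]
        ring
      rw [hexp] at hω
      linarith
  -- probability bounds
  have hb1 : (P A).toReal ≤ 1 - (P (C (t₀ - η * z))).toReal + (P B).toReal := by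
    calc (P A).toReal ≤ (P ((C (t₀ - η * z))ᶜ ∪ B)).toReal := pr_mono hincl1
      _ ≤ (P (C (t₀ - η * z))ᶜ).toReal + (P B).toReal := pr_union _ _
      _ = 1 - (P (C (t₀ - η * z))).toReal + (P B).toReal := by
          rw [pr_compl _ (hCm _)]
  have hb2 : 1 - (P (C (t₀ + η * z))).toReal - (P B).toReal ≤ (P A).toReal := by
    have : (P (C (t₀ + η * z))ᶜ).toReal ≤ (P A).toReal + (P B).toReal :=
      le_trans (pr_mono hincl2) (pr_union _ _)
    rw [pr_compl _ (hCm _)] at this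
    linarith
  -- Berry–Esseen bounds
  have hΔ1 := hΔ (t₀ - η * z)
  have hΔ2 := hΔ (t₀ + η * z)
  have hΔ1' : |(P (C (t₀ - η * z))).toReal - Phi (t₀ - η * z)| ≤ Δ := hΔ1
  have hΔ2' : |(P (C (t₀ + η * z))).toReal - Phi (t₀ + η * z)| ≤ Δ := hΔ2
  -- Lipschitz bounds on Phi
  have hηz : 0 ≤ η * z := mul_nonneg hη hz
  have hlip1 := Phi_lip (show t₀ - η * z ≤ t₀ by linarith)
  have hlip2 := Phi_lip (show t₀ ≤ t₀ + η * z by linarith)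
  have hlip1' : Phi t₀ - Phi (t₀ - η * z) ≤ η * z / Real.sqrt (2 * Real.pi) := by
    have := hlip1.2; simp only [sub_sub_cancel] at this; exact this
  have hlip2' : Phi (t₀ + η * z) - Phi t₀ ≤ η * z / Real.sqrt (2 * Real.pi) := by
    have := hlip2.2; simp only [add_sub_cancel_left] at this; exact this
  have habs1 := abs_le.mp hΔ1'
  have habs2 := abs_le.mp hΔ2'
  rw [abs_le]
  constructor
  · linarith [hb2, habs2.2, hlip2']
  · linarith [hb1, habs1.1, hlip1']
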